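/- For all real numbers b > 1 and a > 0, the sequence c_{ab}(k) = ∑_{n=1}^∞ (μ(n)/n^b)(1 - 1/n^a)^k satisfies c_{ab}(k) = O(k^{(1-b)/a}) as k → ∞, i.e., there exists a constant C such that |c_{ab}(k)| ≤ C k^{(1-b)/a} for all sufficiently large natural numbers k. -/

import Mathlib

open ArithmeticFunction

/-- The generalized Báez-Duarte sequence
`c_{ab}(k) = ∑_{n=1}^∞ (μ(n)/n^b)(1 - 1/n^a)^k`. -/
noncomputable def cab (a b : ℝ) (k : ℕ) : ℝ :=
  ∑' n : ℕ,
    ((moebius (n + 1) : ℤ) : ℝ) / ((n : ℝ) + 1) ^ b * (1 - 1 / ((n : ℝ) + 1) ^ a) ^ k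


open Real in
lemma key_ineq {b : ℝ} (hb : 1 < b) {x : ℝ} (hx : 1 ≤ x) :
    (x + 1) ^ (-b) ≤ (x ^ (1 - b) - (x + 1) ^ (1 - b)) / (b - 1) := by
  have hx0 : (0:ℝ) < x := lt_of_lt_of_le one_pos hx
  have hx1 : (0:ℝ) < x + 1 := by linarith
  have hnot : (0:ℝ) ∉ Set.uIcc x (x+1) := by
    rw [Set.uIcc_of_le (by linarith)]
    rintro ⟨h1, h2⟩; linarith
  have hI : IntervalIntegrable (fun t : ℝ => t ^ (-b)) MeasureTheory.volume x (x+1) :=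
    intervalIntegral.intervalIntegrable_rpow (Or.inr hnot)
  have hconst : ((x+1:ℝ)) ^ (-b) = ∫ _t in x..(x+1), (x+1) ^ (-b) := by
    simp
  have hmono : ∫ _t in x..(x+1), (x+1:ℝ) ^ (-b) ≤ ∫ t in x..(x+1), t ^ (-b) := by
    apply intervalIntegral.integral_mono_on (by linarith) intervalIntegrable_const hI
    intro t ht
    exact Real.rpow_le_rpow_of_nonpos (lt_of_lt_of_le hx0 ht.1) ht.2 (by linarith)
  have hval : ∫ t in x..(x+1), (t:ℝ) ^ (-b) = ((x+1) ^ (-b+1) - x ^ (-b+1)) / (-b+1) :=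
    integral_rpow (Or.inr ⟨by intro h; linarith, hnot⟩)
  rw [hconst]
  refine le_trans hmono (le_of_eq ?_)
  rw [hval]
  rw [div_eq_div_iff (by linarith) (by linarith)]
  ring

lemma tail_bound {b : ℝ} (hb : 1 < b) {N : ℕ} (hN : 1 ≤ N) :
    ∑' j : ℕ, ((N : ℝ) + j + 1) ^ (-b) ≤ (N : ℝ) ^ (1 - b) / (b - 1) := by
  have hN1 : (1:ℝ) ≤ (N:ℝ) := by exact_mod_cast hN
  set f : ℕ → ℝ := fun j => ((N : ℝ) + j) ^ (1 - b) with hf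
  apply tsum_le_of_sum_le'
  · exact div_nonneg (by positivity) (by linarith)
  · intro s
    obtain ⟨M, hM⟩ := s.exists_nat_subset_range
    calc ∑ j ∈ s, ((N : ℝ) + j + 1) ^ (-b)
        ≤ ∑ j ∈ Finset.range M, ((N : ℝ) + j + 1) ^ (-b) := by
          apply Finset.sum_le_sum_of_subset_of_nonneg hM
          intro i _ _; positivity
      _ ≤ ∑ j ∈ Finset.range M, ((f j - f (j+1)) / (b - 1)) := by
          apply Finset.sum_le_sum
          intro j _
          have h := key_ineq hb (x := (N:ℝ) + j)
            (le_add_of_le_of_nonneg hN1 (Nat.cast_nonneg j))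
          have e2 : f (j+1) = ((N:ℝ) + j + 1) ^ (1 - b) := by
            simp only [hf]; push_cast; ring_nf
          rw [e2, hf]
          exact h
      _ ≤ (N : ℝ) ^ (1 - b) / (b - 1) := by
          rw [← Finset.sum_div, Finset.sum_range_sub' f M]
          apply div_le_div_of_nonneg_right ?_ (by linarith)
          have : (0:ℝ) ≤ f M := by simp only [hf]; positivity
          simp only [hf]
          push_cast
          simp only [add_zero]
          linarith

lemma pow_bound {a : ℝ} (ha : 0 < a) {x : ℝ} (hx : 1 ≤ x) {k : ℕ} (hk : 1 ≤ k) (m : ℕ) :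
    (1 - 1 / x ^ a) ^ k ≤ (m.factorial : ℝ) * x ^ (a * m) / (k : ℝ) ^ m := by
  have hx0 : (0:ℝ) < x := lt_of_lt_of_le one_pos hx
  have hp : (1:ℝ) ≤ x ^ a := Real.one_le_rpow hx ha.le
  have hp0 : (0:ℝ) < x ^ a := lt_of_lt_of_le one_pos hp
  have hk0 : (0:ℝ) < (k:ℝ) := by exact_mod_cast hk
  set y : ℝ := (k:ℝ) / x ^ a with hy
  have hy0 : 0 < y := div_pos hk0 hp0
  have h1 : (1 - 1 / x ^ a) ^ k ≤ Real.exp (-y) := by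
    calc (1 - 1 / x ^ a) ^ k ≤ (Real.exp (-(1 / x ^ a))) ^ k := by
          apply pow_le_pow_left₀ (by rw [sub_nonneg]; exact div_le_one_of_le₀ hp hp0.le)
          linarith [Real.add_one_le_exp (-(1 / x ^ a))]
      _ = Real.exp (-y) := by
          rw [← Real.exp_nat_mul, hy]
          congr 1
          field_simp
  have h2 : Real.exp (-y) ≤ (m.factorial : ℝ) / y ^ m := by
    rw [Real.exp_neg, inv_le_comm₀ (Real.exp_pos y) (by positivity), inv_div]
    exact Real.pow_div_factorial_le_exp (x := y) hy0.le m
  refine h1.trans (h2.trans (le_of_eq ?_))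
  have hxam : (x ^ a) ^ m = x ^ (a * m) := by
    rw [← Real.rpow_natCast (x ^ a) m, ← Real.rpow_mul hx0.le]
  rw [hy, div_pow, ← hxam]
  field_simp

theorem stmt7 (a b : ℝ) (ha : 0 < a) (hb : 1 < b) :
    ∃ C : ℝ, ∃ k₁ : ℕ, ∀ k : ℕ, k₁ ≤ k → |cab a b k| ≤ C * (k : ℝ) ^ ((1 - b) / a) := by
  set m : ℕ := ⌈b / a⌉₊ with hm
  have ham : b ≤ a * m := by
    have h1 : b / a ≤ (m : ℝ) := Nat.le_ceil (b / a)
    calc b = a * (b / a) := by field_simp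
      _ ≤ a * m := by nlinarith
  refine ⟨(m.factorial : ℝ) * 2 ^ (a * m - b + 1) + 1 / (b - 1), 1, ?_⟩
  intro k hk
  have hk1 : (1:ℝ) ≤ (k:ℝ) := by exact_mod_cast hk
  have hk0 : (0:ℝ) < (k:ℝ) := by linarith
  set N : ℕ := ⌈(k:ℝ) ^ (1/a)⌉₊ with hN
  have hkr1 : (1:ℝ) ≤ (k:ℝ) ^ (1/a) := Real.one_le_rpow hk1 (by positivity)
  have hkr0 : (0:ℝ) < (k:ℝ) ^ (1/a) := by linarith
  have hNge : (k:ℝ) ^ (1/a) ≤ (N:ℝ) := Nat.le_ceil _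
  have hN1 : 1 ≤ N := Nat.one_le_iff_ne_zero.mpr (by
    intro h
    rw [hN] at h
    have := Nat.ceil_eq_zero.mp h
    linarith)
  have hN1' : (1:ℝ) ≤ (N:ℝ) := by exact_mod_cast hN1
  have hNle : (N:ℝ) ≤ 2 * (k:ℝ) ^ (1/a) := by
    have := Nat.ceil_lt_add_one (R := ℝ) (a := (k:ℝ) ^ (1/a)) (by positivity)
    rw [← hN] at this
    linarith
  -- the dominating sequence
  set g : ℕ → ℝ := fun n => 1 / ((n:ℝ)+1) ^ b * (1 - 1 / ((n:ℝ)+1) ^ a) ^ k with hg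
  have hx1 : ∀ n : ℕ, (1:ℝ) ≤ (n:ℝ) + 1 := fun n => by
    have := Nat.cast_nonneg (α := ℝ) n; linarith
  have hxa1 : ∀ n : ℕ, (1:ℝ) ≤ ((n:ℝ)+1) ^ a := fun n => Real.one_le_rpow (hx1 n) ha.le
  have hbr0 : ∀ n : ℕ, (0:ℝ) ≤ 1 - 1 / ((n:ℝ)+1) ^ a := fun n => by
    rw [sub_nonneg]
    exact div_le_one_of_le₀ (hxa1 n) (by positivity)
  have hbr1 : ∀ n : ℕ, 1 - 1 / ((n:ℝ)+1) ^ a ≤ 1 := fun n => by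
    have : (0:ℝ) < 1 / ((n:ℝ)+1) ^ a := by positivity
    linarith
  have hg0 : ∀ n, 0 ≤ g n := fun n => by
    rw [hg]
    exact mul_nonneg (by positivity) (pow_nonneg (hbr0 n) k)
  have hgle : ∀ n, g n ≤ 1 / ((n:ℝ)+1) ^ b := fun n => by
    rw [hg]
    calc 1 / ((n:ℝ)+1) ^ b * (1 - 1 / ((n:ℝ)+1) ^ a) ^ k
        ≤ 1 / ((n:ℝ)+1) ^ b * 1 := by
          apply mul_le_mul_of_nonneg_left _ (by positivity)
          exact pow_le_one₀ (hbr0 n) (hbr1 n)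
      _ = 1 / ((n:ℝ)+1) ^ b := mul_one _
  have hsb : Summable (fun n : ℕ => 1 / ((n:ℝ)+1) ^ b) := by
    have := (Real.summable_one_div_nat_add_rpow 1 b).mpr hb
    refine this.congr fun n => ?_
    rw [abs_of_nonneg (by positivity : (0:ℝ) ≤ (n:ℝ) + 1)]
  have hgsum : Summable g := Summable.of_nonneg_of_le hg0 hgle hsb
  -- step 1 : |cab| ≤ tsum g
  set f : ℕ → ℝ := fun n =>
    ((moebius (n + 1) : ℤ) : ℝ) / ((n : ℝ) + 1) ^ b * (1 - 1 / ((n : ℝ) + 1) ^ a) ^ k with hf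
  have habs : ∀ n, |f n| ≤ g n := by
    intro n
    rw [hf, hg]
    simp only []
    rw [abs_mul, abs_div]
    have hmu : |((moebius (n + 1) : ℤ) : ℝ)| ≤ 1 := by
      have := @ArithmeticFunction.abs_moebius_le_one (n+1)
      exact_mod_cast this
    have h1 : |(1 - 1 / ((n:ℝ)+1) ^ a) ^ k| = (1 - 1 / ((n:ℝ)+1) ^ a) ^ k := by
      rw [abs_of_nonneg (pow_nonneg (hbr0 n) k)]
    rw [h1, abs_of_nonneg (by positivity : (0:ℝ) ≤ ((n:ℝ)+1) ^ b)]
    apply mul_le_mul_of_nonneg_right _ (pow_nonneg (hbr0 n) k)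
    apply div_le_div_of_nonneg_right hmu (by positivity) |>.trans_eq rfl
  have hfabs : Summable (fun n => |f n|) :=
    Summable.of_nonneg_of_le (fun n => abs_nonneg _) habs hgsum
  have hcab : cab a b k = ∑' n, f n := rfl
  have hstep1 : |cab a b k| ≤ ∑' n, g n := by
    rw [hcab]
    refine le_trans ?_ (hfabs.tsum_le_tsum habs hgsum)
    have h2 : Summable (fun n => ‖f n‖) := by simpa [Real.norm_eq_abs] using hfabs
    have h1 := norm_tsum_le_tsum_norm h2
    simpa [Real.norm_eq_abs] using h1
  -- split
  have hsplit : ∑' n, g n = ∑ n ∈ Finset.range N, g n + ∑' i, g (i + N) :=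
    (hgsum.sum_add_tsum_nat_add N).symm
  -- head bound
  have hhead : ∑ n ∈ Finset.range N, g n
      ≤ (m.factorial : ℝ) * 2 ^ (a * m - b + 1) * (k:ℝ) ^ ((1 - b) / a) := by
    have hterm : ∀ n ∈ Finset.range N,
        g n ≤ (m.factorial : ℝ) * (N:ℝ) ^ (a * m - b) / (k:ℝ) ^ m := by
      intro n hn
      have hnN : (n:ℝ) + 1 ≤ (N:ℝ) := by
        have : n + 1 ≤ N := Finset.mem_range.mp hn
        exact_mod_cast this
      have hx0 : (0:ℝ) < (n:ℝ) + 1 := by linarith [hx1 n]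
      calc g n ≤ 1 / ((n:ℝ)+1) ^ b * ((m.factorial : ℝ) * ((n:ℝ)+1) ^ (a * m) / (k:ℝ) ^ m) := by
            rw [hg]
            exact mul_le_mul_of_nonneg_left (pow_bound ha (hx1 n) hk m) (by positivity)
        _ = (m.factorial : ℝ) * ((n:ℝ)+1) ^ (a * m - b) / (k:ℝ) ^ m := by
            rw [Real.rpow_sub hx0]
            have hb0 : (0:ℝ) < ((n:ℝ)+1) ^ b := Real.rpow_pos_of_pos hx0 b
            field_simp
        _ ≤ (m.factorial : ℝ) * (N:ℝ) ^ (a * m - b) / (k:ℝ) ^ m := by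
            apply div_le_div_of_nonneg_right ?_ (by positivity : (0:ℝ) ≤ (k:ℝ) ^ m)
            exact mul_le_mul_of_nonneg_left
              (Real.rpow_le_rpow (by positivity) hnN (by linarith)) (by positivity)
    have hsum1 : ∑ n ∈ Finset.range N, g n
        ≤ (N:ℝ) * ((m.factorial : ℝ) * (N:ℝ) ^ (a * m - b) / (k:ℝ) ^ m) := by
      have := Finset.sum_le_card_nsmul (Finset.range N) g _ hterm
      simpa [Finset.card_range, nsmul_eq_mul] using this
    refine hsum1.trans ?_
    have hN0 : (0:ℝ) < (N:ℝ) := by linarith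
    have e1 : (N:ℝ) * ((m.factorial : ℝ) * (N:ℝ) ^ (a * m - b) / (k:ℝ) ^ m)
        = (m.factorial : ℝ) * (N:ℝ) ^ (a * m - b + 1) / (k:ℝ) ^ m := by
      rw [Real.rpow_add hN0, Real.rpow_one]
      ring
    rw [e1]
    have e2 : (N:ℝ) ^ (a * m - b + 1) ≤ 2 ^ (a * m - b + 1) * ((k:ℝ) ^ (1/a)) ^ (a * m - b + 1) := by
      rw [← Real.mul_rpow (by norm_num) (by positivity)]
      exact Real.rpow_le_rpow (by positivity) hNle (by linarith)
    have e3 : ((k:ℝ) ^ (1/a)) ^ (a * m - b + 1) = (k:ℝ) ^ ((1/a) * (a * m - b + 1)) := by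
      rw [← Real.rpow_mul hk0.le]
    calc (m.factorial : ℝ) * (N:ℝ) ^ (a * m - b + 1) / (k:ℝ) ^ m
        ≤ (m.factorial : ℝ) * (2 ^ (a * m - b + 1) * (k:ℝ) ^ ((1/a) * (a * m - b + 1))) / (k:ℝ) ^ m := by
          gcongr
          rw [← e3]
          exact e2
      _ = (m.factorial : ℝ) * 2 ^ (a * m - b + 1) * (k:ℝ) ^ ((1 - b) / a) := by
          rw [← Real.rpow_natCast (k:ℝ) m, div_eq_mul_inv, ← Real.rpow_neg hk0.le,
            mul_assoc, mul_assoc, ← Real.rpow_add hk0]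
          have : (1/a) * (a * m - b + 1) + -(m:ℝ) = (1 - b) / a := by
            field_simp
            ring
          rw [this]
          ring
  -- tail bound
  have htail : ∑' i, g (i + N) ≤ 1 / (b - 1) * (k:ℝ) ^ ((1 - b) / a) := by
    have hterm : ∀ i : ℕ, g (i + N) ≤ ((N:ℝ) + i + 1) ^ (-b) := by
      intro i
      refine (hgle (i + N)).trans (le_of_eq ?_)
      have hbase : (((i + N : ℕ) : ℝ) + 1) = ((N:ℝ) + i + 1) := by push_cast; ring
      rw [hbase, Real.rpow_neg (by positivity), one_div]
    have hs1 : Summable (fun i => g (i + N)) := (summable_nat_add_iff N).mpr hgsum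
    have hs2 : Summable (fun i : ℕ => ((N:ℝ) + i + 1) ^ (-b)) := by
      have h := (Real.summable_one_div_nat_add_rpow ((N:ℝ) + 1) b).mpr hb
      refine h.congr fun i => ?_
      rw [abs_of_nonneg (by positivity), Real.rpow_neg (by positivity), one_div]
      congr 2
      ring
    calc ∑' i, g (i + N) ≤ ∑' i : ℕ, ((N:ℝ) + i + 1) ^ (-b) := hs1.tsum_le_tsum hterm hs2
      _ ≤ (N:ℝ) ^ (1 - b) / (b - 1) := tail_bound hb hN1
      _ ≤ 1 / (b - 1) * (k:ℝ) ^ ((1 - b) / a) := by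
          have h1 := Real.rpow_le_rpow_of_nonpos hkr0 hNge (by linarith : 1 - b ≤ 0)
          rw [← Real.rpow_mul hk0.le] at h1
          have h2 : (1/a) * (1 - b) = (1 - b) / a := by field_simp
          rw [h2] at h1
          calc (N:ℝ) ^ (1 - b) / (b - 1) ≤ (k:ℝ) ^ ((1 - b) / a) / (b - 1) :=
                div_le_div_of_nonneg_right h1 (by linarith)
            _ = 1 / (b - 1) * (k:ℝ) ^ ((1 - b) / a) := by ring
  calc |cab a b k| ≤ ∑' n, g n := hstep1
    _ = ∑ n ∈ Finset.range N, g n + ∑' i, g (i + N) := hsplit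
    _ ≤ (m.factorial : ℝ) * 2 ^ (a * m - b + 1) * (k:ℝ) ^ ((1 - b) / a)
        + 1 / (b - 1) * (k:ℝ) ^ ((1 - b) / a) := add_le_add hhead htail
    _ = ((m.factorial : ℝ) * 2 ^ (a * m - b + 1) + 1 / (b - 1)) * (k:ℝ) ^ ((1 - b) / a) := by
        ring
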